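/- Unification is idempotent with respect to the order ≼: for abstract feature structures A and B, A ⊔ B = A if and only if B ≼ A. -/

import Mathlib

/-- A pre-abstract feature structure: a partial assignment of types to paths
(whose domain is the path set `Π`) together with a reentrancy relation. -/
structure PreAFS (F T : Type*) where
  theta : List F → Option T
  rel : List F → List F → Prop

/-- The path set `Π` of a pre-AFS. -/
def PreAFS.dom {F T : Type*} (A : PreAFS F T) : Set (List F) :=
  {π | (A.theta π).isSome}

/-- The pre-AFS conditions: `Π` is nonempty and `≈ ⊆ Π × Π`. -/
def IsPreAFS {F T : Type*} (A : PreAFS F T) : Prop :=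
  A.dom.Nonempty ∧ ∀ π₁ π₂, A.rel π₁ π₂ → π₁ ∈ A.dom ∧ π₂ ∈ A.dom

/-- `Π` is prefix-closed. -/
def PrefixClosed {F T : Type*} (A : PreAFS F T) : Prop :=
  ∀ π α : List F, π ++ α ∈ A.dom → π ∈ A.dom

/-- Fusion-closedness. -/
def FusionClosed {F T : Type*} (A : PreAFS F T) : Prop :=
  ∀ π π' α α' : List F, π ++ α ∈ A.dom → π' ++ α' ∈ A.dom → A.rel π π' →
    π ++ α' ∈ A.dom ∧ π' ++ α ∈ A.dom ∧
    A.rel (π ++ α') (π' ++ α') ∧ A.rel (π' ++ α) (π ++ α)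

/-- `≈` is an equivalence relation on `Π`. -/
def EquivOnDom {F T : Type*} (A : PreAFS F T) : Prop :=
  (∀ π ∈ A.dom, A.rel π π) ∧
  (∀ π₁ π₂, A.rel π₁ π₂ → A.rel π₂ π₁) ∧
  (∀ π₁ π₂ π₃, A.rel π₁ π₂ → A.rel π₂ π₃ → A.rel π₁ π₃)

/-- `≈` has finitely many equivalence classes. -/
def FiniteIndex {F T : Type*} (A : PreAFS F T) : Prop :=
  {C : Set (List F) | ∃ π ∈ A.dom, C = {π' | A.rel π π'}}.Finite

/-- `Θ` respects the equivalence `≈`. -/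
def RespectsRel {F T : Type*} (A : PreAFS F T) : Prop :=
  ∀ π₁ π₂, A.rel π₁ π₂ → A.theta π₁ = A.theta π₂

/-- Abstract feature structures. -/
def IsAFS {F T : Type*} (A : PreAFS F T) : Prop :=
  IsPreAFS A ∧ PrefixClosed A ∧ FusionClosed A ∧
    EquivOnDom A ∧ FiniteIndex A ∧ RespectsRel A

/-- Bounded completeness: every up-bounded subset has a least upper bound. -/
def BddCompleteTypes (T : Type*) [PartialOrder T] : Prop :=
  ∀ S : Set T, (∃ u, ∀ t ∈ S, t ≤ u) → ∃ l, IsLUB S l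

/-- The order `≼` on (pre-)AFSs. -/
def AbsLE {F T : Type*} [PartialOrder T] (A B : PreAFS F T) : Prop :=
  A.dom ⊆ B.dom ∧
  (∀ π₁ π₂, A.rel π₁ π₂ → B.rel π₁ π₂) ∧
  ∀ π ∈ A.dom, ∀ t₁ t₂ : T, A.theta π = some t₁ → B.theta π = some t₂ → t₁ ≤ t₂

/-- Fusion-closedness of a pair (path set, relation). -/
def fusionClosedPair {F : Type*} (D : Set (List F)) (R : List F → List F → Prop) : Prop :=
  ∀ π π' α α' : List F, π ++ α ∈ D → π' ++ α' ∈ D → R π π' →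
    π ++ α' ∈ D ∧ π' ++ α ∈ D ∧ R (π ++ α') (π' ++ α') ∧ R (π' ++ α) (π ++ α)

/-- The path set of the least fusion-closed extension. -/
def clDom {F T : Type*} (A : PreAFS F T) : Set (List F) :=
  {π | ∀ (D : Set (List F)) (R : List F → List F → Prop),
    A.dom ⊆ D → (∀ x y, A.rel x y → R x y) → fusionClosedPair D R → π ∈ D}

/-- The reentrancy relation of the least fusion-closed extension. -/
def clRel {F T : Type*} (A : PreAFS F T) (x y : List F) : Prop :=
  ∀ (D : Set (List F)) (R : List F → List F → Prop),
    A.dom ⊆ D → (∀ a b, A.rel a b → R a b) → fusionClosedPair D R → R x y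

open Classical in
/-- `Cl(A)`: the least extension of `A` to a fusion-closed pre-AFS
(`Θ` is kept on old paths; newly added paths get the trivial type `⊥`,
to be fixed up later by `Ty`). -/
noncomputable def Cl {F T : Type*} [CompleteLattice T] (A : PreAFS F T) : PreAFS F T :=
  ⟨fun π => if π ∈ clDom A then some ((A.theta π).getD ⊥) else none, clRel A⟩

/-- The least extension of `≈` to an equivalence relation on `Π`. -/
inductive EqClo {F T : Type*} (A : PreAFS F T) : List F → List F → Prop
  | base {x y} : A.rel x y → EqClo A x y
  | refl {x} : x ∈ A.dom → EqClo A x x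
  | symm {x y} : EqClo A x y → EqClo A y x
  | trans {x y z} : EqClo A x y → EqClo A y z → EqClo A x z

/-- `Eq(⟨Π,Θ,≈⟩) = ⟨Π,Θ,≈′⟩` where `≈′` is the least equivalence relation
on `Π` containing `≈`. -/
def EqOp {F T : Type*} (A : PreAFS F T) : PreAFS F T := ⟨A.theta, EqClo A⟩

/-- `Ty(⟨Π,Θ,≈⟩) = ⟨Π,Θ′,≈⟩` where `Θ′(π) = ⊔_{π′ ≈ π} Θ(π′)`. -/
noncomputable def Ty {F T : Type*} [CompleteLattice T] (A : PreAFS F T) : PreAFS F T :=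
  ⟨fun π => if (A.theta π).isSome then
      some (sSup {t | ∃ π', A.rel π π' ∧ A.theta π' = some t})
    else none,
   A.rel⟩

/-- The pre-AFS `C` of the definition of unification: `Π_C = Π_A ∪ Π_B`,
`≈_C = ≈_A ∪ ≈_B`, and `Θ_C` is the pointwise type unification. -/
noncomputable def baseUnif {F T : Type*} [CompleteLattice T] (A B : PreAFS F T) :
    PreAFS F T :=
  ⟨fun π => match A.theta π, B.theta π with
    | some t₁, some t₂ => some (t₁ ⊔ t₂)
    | some t₁, none => some t₁
    | none, some t₂ => some t₂
    | none, none => none,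
   fun x y => A.rel x y ∨ B.rel x y⟩

/-- The unification `A ⊔ B = Ty(Eq(Cl(C)))` of two AFSs. -/
noncomputable def unif {F T : Type*} [CompleteLattice T] (A B : PreAFS F T) : PreAFS F T :=
  Ty (EqOp (Cl (baseUnif A B)))


section Aux

variable {F T : Type*}

lemma mem_dom_iff (A : PreAFS F T) (π : List F) :
    π ∈ A.dom ↔ ∃ t, A.theta π = some t := by
  simp [PreAFS.dom, Option.isSome_iff_exists]

lemma dom_subset_baseUnif_right [CompleteLattice T] (A B : PreAFS F T) :
    B.dom ⊆ (baseUnif A B).dom := by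
  intro π hπ
  rw [mem_dom_iff] at hπ ⊢
  obtain ⟨t, ht⟩ := hπ
  cases hA : A.theta π <;> simp [baseUnif, hA, ht]

lemma dom_subset_baseUnif_left [CompleteLattice T] (A B : PreAFS F T) :
    A.dom ⊆ (baseUnif A B).dom := by
  intro π hπ
  rw [mem_dom_iff] at hπ ⊢
  obtain ⟨t, ht⟩ := hπ
  cases hB : B.theta π <;> simp [baseUnif, hB, ht]

lemma dom_subset_clDom [CompleteLattice T] (A : PreAFS F T) : A.dom ⊆ clDom A := by
  intro π hπ D R hD _ _
  exact hD hπ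

lemma cl_dom [CompleteLattice T] (A : PreAFS F T) : (Cl A).dom = clDom A := by
  ext π
  rw [mem_dom_iff]
  constructor
  · rintro ⟨t, ht⟩
    by_contra h
    simp only [Cl, if_neg h] at ht
    cases ht
  · intro h
    refine ⟨(A.theta π).getD ⊥, ?_⟩
    simp only [Cl, if_pos h]

lemma ty_dom [CompleteLattice T] (A : PreAFS F T) : (Ty A).dom = A.dom := by
  ext π
  simp only [PreAFS.dom, Ty, Set.mem_setOf_eq]
  by_cases h : (A.theta π).isSome <;> simp [h]

lemma eqOp_dom (A : PreAFS F T) : (EqOp A).dom = A.dom := rfl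

lemma unif_dom_eq [CompleteLattice T] (A B : PreAFS F T) :
    (unif A B).dom = clDom (baseUnif A B) := by
  rw [unif, ty_dom, eqOp_dom, cl_dom]

end Aux

lemma PreAFS.ext' {F T : Type*} {A B : PreAFS F T}
    (h1 : A.theta = B.theta) (h2 : A.rel = B.rel) : A = B := by
  cases A; cases B; simp_all

theorem unif_eq_left_iff_absLE
    {F T : Type*} [Finite F] [Finite T] [CompleteLattice T]
    (A B : PreAFS F T) (hA : IsAFS A) (hB : IsAFS B) :
    unif A B = A ↔ AbsLE B A := by
  obtain ⟨hpre, hpc, hfc, ⟨hre, hsy, htr⟩, hfin, hresp⟩ := hA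
  constructor
  · intro h
    have hdom : A.dom = clDom (baseUnif A B) := by
      have := unif_dom_eq A B; rw [h] at this; exact this
    refine ⟨?_, ?_, ?_⟩
    · intro π hπ
      rw [hdom]
      exact dom_subset_clDom _ (dom_subset_baseUnif_right A B hπ)
    · intro x y hxy
      have h2 : (unif A B).rel x y := by
        exact EqClo.base (fun D R hD hR hF => hR x y (Or.inr hxy))
      rw [h] at h2
      exact h2
    · intro π hπ t₁ t₂ hB₁ hA₂
      have hπC : π ∈ (baseUnif A B).dom := dom_subset_baseUnif_right A B hπ
      have hπcl : π ∈ clDom (baseUnif A B) := dom_subset_clDom _ hπC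
      have hbu : (baseUnif A B).theta π = some (t₂ ⊔ t₁) := by
        simp [baseUnif, hA₂, hB₁]
      have hth : (Cl (baseUnif A B)).theta π = some (t₂ ⊔ t₁) := by
        simp only [Cl]
        rw [if_pos hπcl, hbu]
        rfl
      have hmem : t₂ ⊔ t₁ ∈ {t | ∃ π', EqClo (Cl (baseUnif A B)) π π' ∧
          (Cl (baseUnif A B)).theta π' = some t} :=
        ⟨π, EqClo.refl (show π ∈ (Cl (baseUnif A B)).dom by
          rw [cl_dom]; exact hπcl), hth⟩
      have hsome : (unif A B).theta π =
          some (sSup {t | ∃ π', EqClo (Cl (baseUnif A B)) π π' ∧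
            (Cl (baseUnif A B)).theta π' = some t}) := by
        show (if ((Cl (baseUnif A B)).theta π).isSome then _ else _) = _
        rw [if_pos (by rw [hth]; rfl)]
        rfl
      rw [h, hA₂] at hsome
      have : t₂ = sSup {t | ∃ π', EqClo (Cl (baseUnif A B)) π π' ∧
          (Cl (baseUnif A B)).theta π' = some t} := Option.some_inj.1 hsome
      calc t₁ ≤ t₂ ⊔ t₁ := le_sup_right
        _ ≤ _ := le_sSup hmem
        _ = t₂ := this.symm
  · rintro ⟨hsub, hrel, hth⟩
    have hCdom : (baseUnif A B).dom = A.dom := by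
      apply subset_antisymm _ (dom_subset_baseUnif_left A B)
      intro π hπ
      rw [mem_dom_iff] at hπ
      obtain ⟨t, ht⟩ := hπ
      cases hAθ : A.theta π with
      | some tA => rw [mem_dom_iff]; exact ⟨tA, hAθ⟩
      | none =>
        cases hBθ : B.theta π with
        | some tB => exact hsub (by rw [mem_dom_iff]; exact ⟨tB, hBθ⟩)
        | none => simp [baseUnif, hAθ, hBθ] at ht
    have hCrelA : ∀ x y, (baseUnif A B).rel x y → A.rel x y :=
      fun x y h => h.elim (fun h => h) (hrel x y)
    have hfcA : fusionClosedPair A.dom A.rel := hfc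
    have hclDom : clDom (baseUnif A B) = A.dom := by
      apply subset_antisymm
      · intro π hπ
        exact hπ A.dom A.rel (by rw [hCdom]) hCrelA hfcA
      · intro π hπ
        exact dom_subset_clDom _ (by rw [hCdom]; exact hπ)
    have hclRel : ∀ x y, clRel (baseUnif A B) x y ↔ A.rel x y := by
      intro x y
      constructor
      · intro h
        exact h A.dom A.rel (by rw [hCdom]) hCrelA hfcA
      · intro h D R hD hR hF
        exact hR x y (Or.inl h)
    have hCl : Cl (baseUnif A B) = A := by
      refine PreAFS.ext' (funext fun π => ?_) (funext fun x => funext fun y =>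
        propext (hclRel x y))
      simp only [Cl]
      by_cases hπ : π ∈ A.dom
      · rw [if_pos (by rw [hclDom]; exact hπ)]
        obtain ⟨tA, htA⟩ := (mem_dom_iff A π).1 hπ
        rw [htA]
        cases hBθ : B.theta π with
        | none => simp [baseUnif, htA, hBθ]
        | some tB =>
          have hle : tB ≤ tA :=
            hth π (by rw [mem_dom_iff]; exact ⟨tB, hBθ⟩) tB tA hBθ htA
          simp [baseUnif, htA, hBθ, sup_eq_left.2 hle]
      · rw [if_neg (by rw [hclDom]; exact hπ)]
        exact (Option.not_isSome_iff_eq_none.mp hπ).symm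
    have hEqClo : ∀ x y, EqClo A x y ↔ A.rel x y := by
      intro x y
      constructor
      · intro h
        induction h with
        | base h => exact h
        | refl h => exact hre _ h
        | symm _ ih => exact hsy _ _ ih
        | trans _ _ ih1 ih2 => exact htr _ _ _ ih1 ih2
      · exact EqClo.base
    have hEq : EqOp A = A :=
      PreAFS.ext' rfl (funext fun x => funext fun y => propext (hEqClo x y))
    have hTy : Ty A = A := by
      refine PreAFS.ext' (funext fun π => ?_) rfl
      simp only [Ty]
      by_cases hs : (A.theta π).isSome
      · obtain ⟨tA, htA⟩ := Option.isSome_iff_exists.1 hs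
        rw [if_pos hs, htA]
        have hSet : {t | ∃ π', A.rel π π' ∧ A.theta π' = some t} = {tA} := by
          ext t
          simp only [Set.mem_setOf_eq, Set.mem_singleton_iff]
          constructor
          · rintro ⟨π', hr, hθ⟩
            have := hresp π π' hr
            rw [htA, hθ] at this
            exact (Option.some_inj.1 this).symm
          · rintro rfl
            exact ⟨π, hre π hs, htA⟩
        rw [hSet, sSup_singleton]
      · rw [if_neg hs]
        exact (Option.not_isSome_iff_eq_none.mp hs).symm
    show Ty (EqOp (Cl (baseUnif A B))) = A
    rw [hCl, hEq, hTy]
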